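/- Let A, B be bounded linear operators on a complex Hilbert space H, let u ∈ H be a unit vector, and let p ≥ 1 be a real number. Then |⟨ABu, u⟩|^{2p} ≤ (1/2) · ( |⟨(AB)²u, u⟩|^p + ‖ABu‖^p · ‖B*A*u‖^p ). -/

import Mathlib

variable {H : Type*} [NormedAddCommGroup H] [InnerProductSpace ℂ H] [CompleteSpace H]

/-- The numerical radius `w(T) = sup { |⟨Tx, x⟩| : ‖x‖ = 1 }`. -/
noncomputable def numRad (T : H →L[ℂ] H) : ℝ :=
  ⨆ x : {x : H // ‖x‖ = 1}, ‖(inner ℂ (T x) x : ℂ)‖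

/-- The spectral radius `r(T)` as a real number. -/
noncomputable def specRad (T : H →L[ℂ] H) : ℝ :=
  (spectralRadius ℂ T).toReal

/-- `ℓ(T) = inf { ‖Tx‖ : ‖x‖ = 1 }`. -/
noncomputable def lowB (T : H →L[ℂ] H) : ℝ :=
  ⨅ x : {x : H // ‖x‖ = 1}, ‖T x‖

/-- The absolute value `|T| = (T*T)^(1/2)`. -/
noncomputable def oAbs (T : H →L[ℂ] H) : H →L[ℂ] H :=
  cfc Real.sqrt (ContinuousLinearMap.adjoint T * T)

/-- Real powers of a (positive) operator via the continuous functional calculus. -/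
noncomputable def oPow (T : H →L[ℂ] H) (r : ℝ) : H →L[ℂ] H :=
  cfc (fun t : ℝ => t ^ r) T
lemma buzano (a b u : H) (hu : ‖u‖ = 1) :
    ‖(inner ℂ a u : ℂ)‖ * ‖(inner ℂ u b : ℂ)‖ ≤
      (1 / 2) * (‖(inner ℂ a b : ℂ)‖ + ‖a‖ * ‖b‖) := by
  obtain ⟨c, hc⟩ : ∃ c : H, c = ((2 : ℂ) * (inner ℂ u b : ℂ)) • u - b := ⟨_, rfl⟩
  have hnc : ‖c‖ = ‖b‖ := by
    have h1 : ‖c‖ ^ 2 = ‖b‖ ^ 2 := by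
      have := norm_sub_sq (𝕜 := ℂ) (((2 : ℂ) * (inner ℂ u b : ℂ)) • u) b
      have hre : ((starRingEnd ℂ) ((2:ℂ) * (inner ℂ u b : ℂ)) * (inner ℂ u b : ℂ))
          = ((2:ℂ) * (‖(inner ℂ u b : ℂ)‖:ℂ)^2) := by
        rw [map_mul, mul_assoc, RCLike.conj_mul, map_ofNat]
        norm_num
      rw [hc, this]
      simp only [inner_smul_left, norm_smul, hre, hu]
      simp [norm_mul, ← Complex.ofReal_pow]
      try ring
    have hle : ‖c‖ ≤ ‖b‖ := by nlinarith [norm_nonneg c, norm_nonneg b]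
    have hge : ‖b‖ ≤ ‖c‖ := by nlinarith [norm_nonneg c, norm_nonneg b]
    linarith
  have hinner : (inner ℂ a c : ℂ) = 2 * (inner ℂ u b : ℂ) * (inner ℂ a u : ℂ) - inner ℂ a b := by
    rw [hc]
    simp only [inner_sub_right, inner_smul_right]
  have hcs : ‖(inner ℂ a c : ℂ)‖ ≤ ‖a‖ * ‖b‖ := by
    calc ‖(inner ℂ a c : ℂ)‖ ≤ ‖a‖ * ‖c‖ := norm_inner_le_norm a c
    _ = ‖a‖ * ‖b‖ := by rw [hnc]
  have key : 2 * (‖(inner ℂ a u : ℂ)‖ * ‖(inner ℂ u b : ℂ)‖) ≤ ‖(inner ℂ a b : ℂ)‖ + ‖a‖ * ‖b‖ := by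
    have h2 : ‖2 * (inner ℂ u b : ℂ) * (inner ℂ a u : ℂ)‖ ≤ ‖(inner ℂ a b : ℂ)‖ + ‖(inner ℂ a c : ℂ)‖ := by
      have : 2 * (inner ℂ u b : ℂ) * (inner ℂ a u : ℂ) = inner ℂ a b + inner ℂ a c := by
        rw [hinner]; ring
      rw [this]
      exact norm_add_le _ _
    have h3 : ‖2 * (inner ℂ u b : ℂ) * (inner ℂ a u : ℂ)‖
        = 2 * (‖(inner ℂ a u : ℂ)‖ * ‖(inner ℂ u b : ℂ)‖) := by
      simp [norm_mul]; ring
    linarith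
  linarith

lemma half_pow {a b p : ℝ} (ha : 0 ≤ a) (hb : 0 ≤ b) (hp : 1 ≤ p) :
    ((1 / 2) * (a + b)) ^ p ≤ (1 / 2) * (a ^ p + b ^ p) := by
  lift a to NNReal using ha
  lift b to NNReal using hb
  have := NNReal.rpow_arith_mean_le_arith_mean2_rpow (1/2) (1/2) a b (by rw [← NNReal.coe_inj]; norm_num) hp
  have h2 := NNReal.coe_le_coe.mpr this
  push_cast at h2
  calc ((1/2) * ((a:ℝ) + b)) ^ p = ((1/2) * a + (1/2) * b) ^ p := by ring_nf
  _ ≤ (1/2) * a ^ p + (1/2) * b ^ p := h2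
  _ = (1/2) * ((a:ℝ) ^ p + b ^ p) := by ring

theorem abs_inner_mul_rpow_le
    (A B : H →L[ℂ] H) (u : H) (hu : ‖u‖ = 1) (p : ℝ) (hp : 1 ≤ p) :
    ‖(inner ℂ ((A * B) u) u : ℂ)‖ ^ (2 * p) ≤
      (1 / 2) * (‖(inner ℂ (((A * B) ^ 2) u) u : ℂ)‖ ^ p +
        ‖(A * B) u‖ ^ p *
          ‖(ContinuousLinearMap.adjoint B * ContinuousLinearMap.adjoint A) u‖ ^ p) := by
  set T := A * B with hT
  have hadj : ContinuousLinearMap.adjoint B * ContinuousLinearMap.adjoint A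
      = ContinuousLinearMap.adjoint T := by
    rw [hT]
    exact (ContinuousLinearMap.adjoint_comp A B).symm
  rw [hadj]
  set Ts := ContinuousLinearMap.adjoint T with hTs
  have h1 : (inner ℂ u (Ts u) : ℂ) = inner ℂ (T u) u := by
    rw [hTs, ContinuousLinearMap.adjoint_inner_right]
  have h2 : (inner ℂ (T u) (Ts u) : ℂ) = inner ℂ ((T ^ 2) u) u := by
    rw [hTs, ContinuousLinearMap.adjoint_inner_right]
    simp [sq, ContinuousLinearMap.mul_apply]
  have core : ‖(inner ℂ (T u) u : ℂ)‖ ^ (2:ℕ) ≤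
      (1 / 2) * (‖(inner ℂ ((T ^ 2) u) u : ℂ)‖ + ‖T u‖ * ‖Ts u‖) := by
    have hb := buzano (T u) (Ts u) u hu
    rw [h1, h2] at hb
    calc ‖(inner ℂ (T u) u : ℂ)‖ ^ (2:ℕ) = ‖(inner ℂ (T u) u : ℂ)‖ * ‖(inner ℂ (T u) u : ℂ)‖ := sq _
    _ ≤ _ := hb
  have hx : (0:ℝ) ≤ ‖(inner ℂ (T u) u : ℂ)‖ := norm_nonneg _
  have hstep : ‖(inner ℂ (T u) u : ℂ)‖ ^ (2 * p)
      = (‖(inner ℂ (T u) u : ℂ)‖ ^ (2:ℕ)) ^ p := by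
    rw [← Real.rpow_natCast ‖(inner ℂ (T u) u : ℂ)‖ 2, ← Real.rpow_mul hx]
    norm_num
  have hr : (‖(inner ℂ (T u) u : ℂ)‖ ^ (2:ℕ)) ^ p ≤
      ((1 / 2) * (‖(inner ℂ ((T ^ 2) u) u : ℂ)‖ + ‖T u‖ * ‖Ts u‖)) ^ p :=
    Real.rpow_le_rpow (by positivity) core (by linarith)
  have hh := half_pow (a := ‖(inner ℂ ((T ^ 2) u) u : ℂ)‖) (b := ‖T u‖ * ‖Ts u‖)
    (norm_nonneg _) (by positivity) hp
  have hmul : (‖T u‖ * ‖Ts u‖) ^ p = ‖T u‖ ^ p * ‖Ts u‖ ^ p :=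
    Real.mul_rpow (norm_nonneg _) (norm_nonneg _)
  rw [hstep]
  calc (‖(inner ℂ (T u) u : ℂ)‖ ^ (2:ℕ)) ^ p
      ≤ ((1 / 2) * (‖(inner ℂ ((T ^ 2) u) u : ℂ)‖ + ‖T u‖ * ‖Ts u‖)) ^ p := hr
    _ ≤ (1 / 2) * (‖(inner ℂ ((T ^ 2) u) u : ℂ)‖ ^ p + (‖T u‖ * ‖Ts u‖) ^ p) := hh
    _ = (1 / 2) * (‖(inner ℂ ((T ^ 2) u) u : ℂ)‖ ^ p + ‖T u‖ ^ p * ‖Ts u‖ ^ p) := by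
        rw [hmul]
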